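/- The map Θ sending a generator s_i of a finite cycle set to the monomial matrix D_{s_i} P_{ψ(s_i)}, where D_{s_i} = diag(1,...,q,...,1) with q in position i and ψ(s_i)(j) is determined by s_i * s_j = s_{ψ(s_i)(j)}, respects the defining relations Θ(s)Θ(s*t) = Θ(t)Θ(t*s), hence extends to a monoid homomorphism from the structure monoid to monomial matrices over ℚ[q]. -/

import Mathlib

/-- Dehornoy's `Ω` expression: `Omega op k t` is `Ω_{k+1}(t 0, …, t k)`,
defined by `Ω_1(x) = x` and
`Ω_k(x_1,…,x_k) = Ω_{k-1}(x_1,…,x_{k-1}) * Ω_{k-1}(x_1,…,x_{k-2},x_k)`. -/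
def Omega {S : Type*} (op : S → S → S) : (k : ℕ) → (Fin (k + 1) → S) → S
  | 0, t => t 0
  | k + 1, t =>
      op (Omega op k fun i => t i.castSucc)
        (Omega op k fun i =>
          if i = Fin.last k then t (Fin.last (k + 1)) else t i.castSucc)

/-- Dehornoy's `Π` expression: `PiExpr op ι k t = ι(Ω_1(t_1)) ⋯ ι(Ω_k(t_1,…,t_k))`. -/
def PiExpr {S M : Type*} [Monoid M] (op : S → S → S) (ι : S → M) :
    (k : ℕ) → (Fin k → S) → M
  | 0, _ => 1
  | k + 1, t => PiExpr op ι k (fun i => t i.castSucc) * ι (Omega op k t)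

/-- The defining relations of the structure monoid: `s (s*t) = t (t*s)`. -/
def csRel {S : Type*} (op : S → S → S) (a b : FreeMonoid S) : Prop :=
  ∃ s t : S, a = FreeMonoid.of s * FreeMonoid.of (op s t) ∧
    b = FreeMonoid.of t * FreeMonoid.of (op t s)

/-- The structure monoid `⟨S ∣ s(s*t) = t(t*s)⟩⁺` of a cycle set. -/
abbrev StructureMonoid {S : Type*} (op : S → S → S) := (conGen (csRel op)).Quotient

/-- The canonical generators of the structure monoid. -/
def mkM {S : Type*} (op : S → S → S) (s : S) : StructureMonoid op :=
  (conGen (csRel op)).mk' (FreeMonoid.of s)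

/-- The permutation matrix of `σ`: row `i` has a `1` in column `σ i`. -/
def Pmat {ι : Type*} [DecidableEq ι] (R : Type*) [Semiring R] (σ : Equiv.Perm ι) :
    Matrix ι ι R := Matrix.of fun i j => if j = σ i then 1 else 0

/-- The diagonal matrix `D_s = diag(1,…,q,…,1)` with `q` in position `s`. -/
noncomputable def Dmat {S : Type*} [DecidableEq S] (s : S) : Matrix S S (Polynomial ℚ) :=
  Matrix.diagonal fun t => if t = s then Polynomial.X else 1

/-- The permutation `ψ(s) : t ↦ s * t` attached to an element of a cycle set. -/
noncomputable def psi {S : Type*} (op : S → S → S) (hbij : ∀ s : S, Function.Bijective (op s))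
    (s : S) : Equiv.Perm S := Equiv.ofBijective (op s) (hbij s)

/-- The monomial matrix `Θ(s) = D_s P_{ψ(s)}` associated to a generator. -/
noncomputable def theta {S : Type*} [Fintype S] [DecidableEq S] (op : S → S → S)
    (hbij : ∀ s : S, Function.Bijective (op s)) (s : S) : Matrix S S (Polynomial ℚ) :=
  Dmat s * Pmat (Polynomial ℚ) (psi op hbij s)


lemma theta_apply {S : Type*} [Fintype S] [DecidableEq S] (op : S → S → S)
    (hbij : ∀ s : S, Function.Bijective (op s)) (s i j : S) :
    theta op hbij s i j
      = if j = op s i then (if i = s then Polynomial.X else 1) else 0 := by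
  simp only [theta, Dmat, Pmat, psi, Matrix.diagonal_mul, Matrix.of_apply,
    Equiv.ofBijective_apply]
  split <;> simp

lemma theta_mul_apply {S : Type*} [Fintype S] [DecidableEq S] (op : S → S → S)
    (hbij : ∀ s : S, Function.Bijective (op s)) (s r i j : S) :
    (theta op hbij s * theta op hbij r) i j
      = (if i = s then Polynomial.X else 1) * (if op s i = r then Polynomial.X else 1)
          * (if j = op r (op s i) then 1 else 0) := by
  rw [Matrix.mul_apply, Finset.sum_eq_single (op s i)]
  · rw [theta_apply, theta_apply]
    simp [mul_assoc]
  · intro k _ hk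
    rw [theta_apply]
    simp [hk]
  · simp

/-- The map `Θ : s ↦ D_s P_{ψ(s)}` respects the defining relations of the structure
monoid, hence extends to a monoid homomorphism into monomial matrices over `ℚ[q]`. -/
theorem theta_extends_to_hom {S : Type*} [Fintype S] [DecidableEq S] (op : S → S → S)
    (hbij : ∀ s : S, Function.Bijective (op s))
    (hcs : ∀ s t u : S, op (op s t) (op s u) = op (op t s) (op t u)) :
    (∀ s t : S, theta op hbij s * theta op hbij (op s t)
        = theta op hbij t * theta op hbij (op t s)) ∧
    ∃ Θ : StructureMonoid op →* Matrix S S (Polynomial ℚ),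
      ∀ s : S, Θ (mkM op s) = theta op hbij s := by
  have key : ∀ s t : S, theta op hbij s * theta op hbij (op s t)
      = theta op hbij t * theta op hbij (op t s) := by
    intro s t
    ext i j
    rw [theta_mul_apply, theta_mul_apply]
    simp only [(hbij s).injective.eq_iff, (hbij t).injective.eq_iff, hcs s t i]
    by_cases h1 : i = s <;> by_cases h2 : i = t <;> simp [h1, h2]
  refine ⟨key, ?_⟩
  have hle : conGen (csRel op) ≤ Con.ker (FreeMonoid.lift (theta op hbij)) := by
    refine Con.conGen_le.2 ?_
    rintro a b ⟨s, t, rfl, rfl⟩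
    simp only [Con.ker_rel, map_mul, FreeMonoid.lift_eval_of]
    exact key s t
  refine ⟨Con.lift _ (FreeMonoid.lift (theta op hbij)) hle, fun s => ?_⟩
  simp [mkM, Con.lift_mk']
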